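/- Let G be a finite group and p a prime with ε_p(G) = m. Then every p-element of G/Z(G) has order dividing p^m; equivalently, the exponent of a Sylow p-subgroup of G/Z(G) divides p^m. -/

import Mathlib

open MulAction Subgroup Function in
/-- A finite group is not the union of the conjugates of a proper subgroup: there is an
element acting without fixed points on the coset space. -/
lemma exists_fixed_point_free_smul_quotient {G : Type*} [Group G] [Finite G]
    (H : Subgroup G) (hH : H ≠ ⊤) :
    ∃ a : G, ∀ q : G ⧸ H, a • q ≠ q := by
  classical
  letI := Fintype.ofFinite G
  by_contra hcon
  push_neg at hcon
  letI : Fintype (G ⧸ H) := Fintype.ofFinite _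
  letI : ∀ a : G, Fintype (fixedBy (G ⧸ H) a) := fun a => Fintype.ofFinite _
  letI : Fintype (Quotient (orbitRel G (G ⧸ H))) := Fintype.ofFinite _
  have hB := MulAction.sum_card_fixedBy_eq_card_orbits_mul_card_group G (G ⧸ H)
  have hsub : Subsingleton (orbitRel.Quotient G (G ⧸ H)) :=
    (MulAction.pretransitive_iff_subsingleton_quotient G (G ⧸ H)).mp inferInstance
  have hΩ : Fintype.card (Quotient (orbitRel G (G ⧸ H))) = 1 := by
    rw [Fintype.card_eq_one_iff]
    obtain ⟨q⟩ : Nonempty (Quotient (orbitRel G (G ⧸ H))) := inferInstance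
    exact ⟨q, fun y => Subsingleton.elim y q⟩
  rw [hΩ, one_mul] at hB
  have hidx : 1 < Fintype.card (G ⧸ H) := by
    rw [← Nat.card_eq_fintype_card, ← Subgroup.index_eq_card]
    exact Subgroup.one_lt_index_of_ne_top hH
  obtain ⟨q₁, q₂, hne⟩ := Fintype.exists_pair_of_one_lt_card hidx
  have hlt : ∑ a : G, (1 : ℕ) < ∑ a : G, Fintype.card (fixedBy (G ⧸ H) a) := by
    refine Finset.sum_lt_sum (fun a _ => ?_) ⟨1, Finset.mem_univ _, ?_⟩
    · obtain ⟨q, hq⟩ := hcon a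
      exact Fintype.card_pos_iff.mpr ⟨⟨q, hq⟩⟩
    · rw [Fintype.one_lt_card_iff]
      exact ⟨⟨q₁, by simp [MulAction.mem_fixedBy]⟩, ⟨q₂, by simp [MulAction.mem_fixedBy]⟩,
        by simpa [Subtype.ext_iff] using hne⟩
  rw [hB] at hlt
  simp at hlt

/-- `εₚ(G)`: the largest `p`-exponent of a conjugacy class size
(equivalently, of the index of a centralizer) in `G`. -/
noncomputable def epsP (p : ℕ) (G : Type*) [Group G] : ℕ :=
  sSup {k | ∃ x : G, ((Subgroup.centralizer {x}).index).factorization p = k}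

open MulAction Subgroup Function in
/-- If `x` is a `p`-element of a finite group `G`, then `x ^ p ^ εₚ(G)` is central. -/
lemma pow_epsP_mem_center {G : Type*} [Group G] [Finite G] (p : ℕ) [hp : Fact p.Prime]
    {m j : ℕ} (hm : epsP p G = m) (x : G) (hx : orderOf x = p ^ j) :
    x ^ p ^ m ∈ Subgroup.center G := by
  classical
  by_contra hz
  set z : G := x ^ p ^ m with hzdef
  have hne : Subgroup.centralizer {z} ≠ ⊤ := fun h =>
    hz (Subgroup.centralizer_eq_top_iff_subset.mp h rfl)
  obtain ⟨a, ha⟩ := exists_fixed_point_free_smul_quotient _ hne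
  -- `a⁻¹` is an element whose conjugacy class avoids the centralizer of `z`
  set g : G := a⁻¹ with hgdef
  have ha' : ∀ h : G, ¬ Commute (h * g * h⁻¹) z := by
    intro h hc
    refine ha ((h⁻¹ : G) : G ⧸ Subgroup.centralizer {z}) ?_
    rw [MulAction.Quotient.smul_mk, QuotientGroup.eq]
    rw [Subgroup.mem_centralizer_singleton_iff]
    have hc' : Commute ((a * h⁻¹)⁻¹ * h⁻¹) z := by
      have : h * g * h⁻¹ = (a * h⁻¹)⁻¹ * h⁻¹ := by rw [hgdef]; group
      rwa [this] at hc
    exact hc'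
  set C : Subgroup G := Subgroup.centralizer {g} with hCdef
  -- `z` acts without fixed points on `G ⧸ C`
  have key : ∀ q : G ⧸ C, ¬ z • q = q := by
    intro q hq
    obtain ⟨h, rfl⟩ := QuotientGroup.mk_surjective q
    rw [MulAction.Quotient.smul_mk, QuotientGroup.eq,
      Subgroup.mem_centralizer_singleton_iff] at hq
    have c1 : Commute ((z * h)⁻¹ * h) g := hq
    have c2 : Commute (h⁻¹ * z * h) g := by
      have := c1.inv_left
      have e : ((z * h)⁻¹ * h)⁻¹ = h⁻¹ * z * h := by group
      rwa [e] at this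
    have c3 := c2.map (MulAut.conj h).toMonoidHom
    simp only [MulEquiv.coe_toMonoidHom, MulAut.conj_apply] at c3
    have e1 : h * (h⁻¹ * z * h) * h⁻¹ = z := by group
    rw [e1] at c3
    exact ha' h c3.symm
  -- all orbit sizes of `⟨x⟩` on `G ⧸ C` are divisible by `p ^ (m + 1)`
  set T : orbitRel.Quotient (Subgroup.zpowers x) (G ⧸ C) → ℕ :=
    fun q => Function.minimalPeriod (x • ·) q.out with hTdef
  have hTdvd : ∀ q, T q ∣ p ^ j := by
    intro q
    rw [← hx]
    exact (pow_smul_eq_iff_minimalPeriod_dvd).mp (by rw [pow_orderOf_eq_one, one_smul])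
  have hTnotdvd : ∀ q, ¬ T q ∣ p ^ m := by
    intro q hd
    exact key q.out ((pow_smul_eq_iff_minimalPeriod_dvd).mpr hd)
  have hTbig : ∀ q, p ^ (m + 1) ∣ T q := by
    intro q
    obtain ⟨t, ht, hTq⟩ := (Nat.dvd_prime_pow hp.out).mp (hTdvd q)
    rw [hTq]
    refine pow_dvd_pow p ?_
    by_contra hmt
    exact hTnotdvd q (by rw [hTq]; exact pow_dvd_pow p (by omega))
  haveI : ∀ q, NeZero (T q) := by
    intro q
    refine ⟨fun h0 => ?_⟩
    have := hTdvd q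
    rw [h0] at this
    exact (pow_ne_zero j hp.out.ne_zero) (zero_dvd_iff.mp this)
  letI : Fintype (orbitRel.Quotient (Subgroup.zpowers x) (G ⧸ C)) := Fintype.ofFinite _
  have hcard : C.index = ∑ q, T q := by
    rw [Subgroup.index_eq_card, Nat.card_congr (Subgroup.quotientEquivSigmaZMod C x)]
    letI : ∀ q, Fintype (ZMod (T q)) := fun q => inferInstance
    simp [Nat.card_eq_fintype_card, Fintype.card_sigma, ZMod.card]
    convert rfl
  have hdvd : p ^ (m + 1) ∣ C.index := by
    rw [hcard]
    exact Finset.dvd_sum fun q _ => hTbig q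
  -- contradiction with `epsP p G = m`
  have hC0 : C.index ≠ 0 := Subgroup.index_ne_zero_of_finite
  have hk : m + 1 ≤ (C.index).factorization p :=
    (Nat.Prime.pow_dvd_iff_le_factorization hp.out hC0).mp hdvd
  have hbdd : BddAbove {k | ∃ w : G, ((Subgroup.centralizer {w}).index).factorization p = k} := by
    refine ⟨(Nat.card G).factorization p, fun k hk => ?_⟩
    obtain ⟨w, rfl⟩ := hk
    have h1 : p ^ (((Subgroup.centralizer {w}).index).factorization p) ∣ Nat.card G :=
      (Nat.ordProj_dvd _ p).trans (Subgroup.index_dvd_card _)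
    exact (Nat.Prime.pow_dvd_iff_le_factorization hp.out Nat.card_pos.ne').mp h1
  have hle : (C.index).factorization p ≤ epsP p G :=
    le_csSup hbdd ⟨g, rfl⟩
  rw [hm] at hle
  omega

theorem orderOf_pElement_quotient_center_dvd {G : Type*} [Group G] [Finite G]
    (p : ℕ) [Fact p.Prime] (m : ℕ) (hm : epsP p G = m)
    (y : G ⧸ Subgroup.center G) (hy : ∃ k : ℕ, orderOf y = p ^ k) :
    orderOf y ∣ p ^ m := by
  obtain ⟨k, hk⟩ := hy
  obtain ⟨g, rfl⟩ := QuotientGroup.mk_surjective y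
  have hp : p.Prime := Fact.out
  set n : ℕ := orderOf g with hn
  have hn0 : n ≠ 0 := (orderOf_pos g).ne'
  set b : ℕ := ordCompl[p] n with hb
  set x : G := g ^ b with hxdef
  have hxord : orderOf x = p ^ (n.factorization p) := by
    have hbpos : 0 < b := Nat.ordCompl_pos p hn0
    have hnb : n = p ^ (n.factorization p) * b := (Nat.ordProj_mul_ordCompl_eq_self n p).symm
    rw [hxdef, orderOf_pow, ← hn, Nat.gcd_eq_right (Nat.ordCompl_dvd n p)]
    exact Nat.div_eq_of_eq_mul_left hbpos hnb
  have hcenter := pow_epsP_mem_center p hm x hxord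
  have h1 : ((QuotientGroup.mk g : G ⧸ Subgroup.center G) ^ b) ^ p ^ m = 1 := by
    rw [← QuotientGroup.mk_pow, ← QuotientGroup.mk_pow, QuotientGroup.eq_one_iff]
    exact hcenter
  have h2 : orderOf ((QuotientGroup.mk g : G ⧸ Subgroup.center G) ^ b) ∣ p ^ m :=
    orderOf_dvd_of_pow_eq_one h1
  have hcop : Nat.Coprime (orderOf (QuotientGroup.mk g : G ⧸ Subgroup.center G)) b := by
    rw [hk]
    exact (Nat.coprime_ordCompl hp hn0).pow_left k
  rwa [orderOf_pow, hcop.gcd_eq_one, Nat.div_one] at h2
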